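/- Let P_z and P_w be two multilayer SBM distributions on symmetric binary tensors X ∈ {0,1}^{N×N×T} with zero diagonal, corresponding to labelings z, w : [N] → {1,2} with common interaction distributions f = ⊗_t Ber(p_t) (intra-block) and g = ⊗_t Ber(q_t) (inter-block). Then the order-1/2 Rényi divergence satisfies D_{1/2}(P_z ‖ P_w) = (1/2) d_Mir(z,w) · I_T, where I_T = Σ_{t=1}^T I(p_t, q_t) and I(p,q) = D_{1/2}(Ber(p) ‖ Ber(q)). -/

import Mathlib

set_option maxHeartbeats 1000000


/-- The set of unordered pairs `{i,j} ⊆ [N]`, encoded as ordered pairs with `i < j`. -/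
abbrev PairIdx (N : ℕ) := {e : Fin N × Fin N // e.1 < e.2}

/-- Bernoulli density with mean `θ`: `Ber_θ(x) = θ^x (1−θ)^{1−x}`. -/
def bern (θ : ℝ) (x : Bool) : ℝ := if x then θ else 1 - θ

/-- Density of the two-block multilayer SBM with labeling `z`, intra-block link
probabilities `p t` and inter-block link probabilities `q t`, on symmetric binary
tensors encoded by their strictly-upper-triangular entries. -/
def sbmDensity {N T : ℕ} (z : Fin N → Fin 2) (p q : Fin T → ℝ)
    (X : PairIdx N → Fin T → Bool) : ℝ :=
  ∏ e : PairIdx N, ∏ t : Fin T,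
    bern (if z e.1.1 = z e.1.2 then p t else q t) (X e t)

/-- Number of unordered pairs `{i,j}`, `i ≠ j`, with indicator `[z i = z j] = a`
and `[w i = w j] = b`. -/
def pairCount {N K : ℕ} (z w : Fin N → Fin K) (a b : Bool) : ℕ :=
  (Finset.univ.filter (fun p : Fin N × Fin N =>
    p.1 < p.2 ∧ decide (z p.1 = z p.2) = a ∧ decide (w p.1 = w p.2) = b)).card

/-- Twice the Rényi divergence of order 1/2 between `Ber(p)` and `Ber(q)`. -/
noncomputable def renyiBer (p q : ℝ) : ℝ :=
  -2 * Real.log (Real.sqrt (1 - p) * Real.sqrt (1 - q) + Real.sqrt p * Real.sqrt q)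

lemma sqrt_prod' {ι : Type*} (s : Finset ι) (f : ι → ℝ) (h : ∀ i ∈ s, 0 ≤ f i) :
    Real.sqrt (∏ i ∈ s, f i) = ∏ i ∈ s, Real.sqrt (f i) := by
  induction s using Finset.cons_induction with
  | empty => simp
  | cons a s ha ih =>
    rw [Finset.prod_cons, Finset.prod_cons,
      Real.sqrt_mul (h a (Finset.mem_cons_self a s)),
      ih (fun i hi => h i (Finset.mem_cons_of_mem hi))]

lemma bern_nonneg {θ : ℝ} (h0 : 0 ≤ θ) (h1 : θ ≤ 1) (x : Bool) : 0 ≤ bern θ x := by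
  cases x <;> simp [bern] <;> linarith

/-- `D_{1/2}(P_z ‖ P_w) = (1/2) d_Mir(z,w) · I_T` for the two-block multilayer SBM,
where `d_Mir(z,w) = 2(M_{01}+M_{10})` and `I_T = Σ_t I(p_t, q_t)`. -/
theorem stmt7 (N T : ℕ) (z w : Fin N → Fin 2) (p q : Fin T → ℝ)
    (hp : ∀ t, 0 < p t ∧ p t < 1) (hq : ∀ t, 0 < q t ∧ q t < 1) :
    -2 * Real.log (∑ X : PairIdx N → Fin T → Bool,
        Real.sqrt (sbmDensity z p q X * sbmDensity w p q X)) =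
      (1 / 2 : ℝ) *
        (2 * (pairCount z w false true + pairCount z w true false) : ℝ) *
        ∑ t, renyiBer (p t) (q t) := by
  classical
  set θ1 : PairIdx N → Fin T → ℝ :=
    fun e t => if z e.1.1 = z e.1.2 then p t else q t with hθ1
  set θ2 : PairIdx N → Fin T → ℝ :=
    fun e t => if w e.1.1 = w e.1.2 then p t else q t with hθ2
  have hθpos : ∀ (e : PairIdx N) (t : Fin T),
      (0 < θ1 e t ∧ θ1 e t < 1) ∧ (0 < θ2 e t ∧ θ2 e t < 1) := by
    intro e t
    constructor
    · simp only [hθ1]; split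
      · exact hp t
      · exact hq t
    · simp only [hθ2]; split
      · exact hp t
      · exact hq t
  set S : PairIdx N → Fin T → ℝ :=
    fun e t => Real.sqrt (θ1 e t * θ2 e t) +
      Real.sqrt ((1 - θ1 e t) * (1 - θ2 e t)) with hS
  have hSpos : ∀ (e : PairIdx N) (t : Fin T), 0 < S e t := by
    intro e t
    have h := hθpos e t
    have h1 : 0 < Real.sqrt (θ1 e t * θ2 e t) :=
      Real.sqrt_pos.2 (mul_pos h.1.1 h.2.1)
    have h2 : 0 ≤ Real.sqrt ((1 - θ1 e t) * (1 - θ2 e t)) := Real.sqrt_nonneg _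
    simp only [hS]; linarith
  -- Step 1: factorize the Bhattacharyya sum
  have hsum : (∑ X : PairIdx N → Fin T → Bool,
      Real.sqrt (sbmDensity z p q X * sbmDensity w p q X)) =
      ∏ e : PairIdx N, ∏ t : Fin T, S e t := by
    have hstep : ∀ X : PairIdx N → Fin T → Bool,
        Real.sqrt (sbmDensity z p q X * sbmDensity w p q X) =
        ∏ e : PairIdx N, ∏ t : Fin T,
          Real.sqrt (bern (θ1 e t) (X e t) * bern (θ2 e t) (X e t)) := by
      intro X
      have hb : ∀ (e : PairIdx N) (t : Fin T),
          0 ≤ bern (θ1 e t) (X e t) * bern (θ2 e t) (X e t) := by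
        intro e t
        have h := hθpos e t
        exact mul_nonneg (bern_nonneg h.1.1.le h.1.2.le _)
          (bern_nonneg h.2.1.le h.2.2.le _)
      rw [sbmDensity, sbmDensity, ← Finset.prod_mul_distrib]
      rw [sqrt_prod' _ _ (fun e _ => by
        rw [← Finset.prod_mul_distrib]
        exact Finset.prod_nonneg (fun t _ => hb e t))]
      refine Finset.prod_congr rfl (fun e _ => ?_)
      rw [← Finset.prod_mul_distrib,
        sqrt_prod' _ _ (fun t _ => hb e t)]
    calc (∑ X : PairIdx N → Fin T → Bool,
          Real.sqrt (sbmDensity z p q X * sbmDensity w p q X))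
        = ∑ X : PairIdx N → Fin T → Bool, ∏ e : PairIdx N, ∏ t : Fin T,
            Real.sqrt (bern (θ1 e t) (X e t) * bern (θ2 e t) (X e t)) :=
          Finset.sum_congr rfl (fun X _ => hstep X)
      _ = ∏ e : PairIdx N, ∑ y : Fin T → Bool, ∏ t : Fin T,
            Real.sqrt (bern (θ1 e t) (y t) * bern (θ2 e t) (y t)) :=
          (Fintype.prod_sum (fun (e : PairIdx N) (y : Fin T → Bool) =>
            ∏ t : Fin T, Real.sqrt (bern (θ1 e t) (y t) * bern (θ2 e t) (y t)))).symm
      _ = ∏ e : PairIdx N, ∏ t : Fin T, ∑ x : Bool,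
            Real.sqrt (bern (θ1 e t) x * bern (θ2 e t) x) := by
          refine Finset.prod_congr rfl (fun e _ => ?_)
          exact (Fintype.prod_sum (fun (t : Fin T) (x : Bool) =>
            Real.sqrt (bern (θ1 e t) x * bern (θ2 e t) x))).symm
      _ = ∏ e : PairIdx N, ∏ t : Fin T, S e t := by
          refine Finset.prod_congr rfl (fun e _ => Finset.prod_congr rfl
            (fun t _ => ?_))
          rw [Fintype.sum_bool]
          simp [bern, hS]
  rw [hsum]
  -- Step 2: take logs
  have hlog : Real.log (∏ e : PairIdx N, ∏ t : Fin T, S e t) =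
      ∑ e : PairIdx N, ∑ t : Fin T, Real.log (S e t) := by
    rw [Real.log_prod (fun e _ =>
      ne_of_gt (Finset.prod_pos (fun t _ => hSpos e t)))]
    exact Finset.sum_congr rfl (fun e _ =>
      Real.log_prod (fun t _ => ne_of_gt (hSpos e t)))
  rw [hlog, Finset.mul_sum]
  -- Step 3: per-pair term
  have hterm : ∀ e : PairIdx N,
      -2 * ∑ t : Fin T, Real.log (S e t) =
      (if decide (z e.1.1 = z e.1.2) = decide (w e.1.1 = w e.1.2) then (0:ℝ)
        else 1) * ∑ t, renyiBer (p t) (q t) := by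
    intro e
    by_cases hzw : decide (z e.1.1 = z e.1.2) = decide (w e.1.1 = w e.1.2)
    · have hsame : ∀ t, S e t = 1 := by
        intro t
        have hθeq : θ1 e t = θ2 e t := by
          simp only [hθ1, hθ2]
          by_cases hzz : z e.1.1 = z e.1.2
          · have : w e.1.1 = w e.1.2 := by
              simpa [hzz] using hzw.symm
            simp [hzz, this]
          · have : ¬ w e.1.1 = w e.1.2 := by
              simpa [hzz] using hzw.symm
            simp [hzz, this]
        have h := hθpos e t
        rw [hS]
        simp only [← hθeq]
        rw [Real.sqrt_mul_self h.1.1.le, Real.sqrt_mul_self (by linarith [h.1.2])]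
        ring
      simp [hsame, hzw]
    · have hren : ∀ t, -2 * Real.log (S e t) = renyiBer (p t) (q t) := by
        intro t
        have hp' := hp t; have hq' := hq t
        rw [hS, renyiBer]
        by_cases hzz : z e.1.1 = z e.1.2
        · have hww : ¬ w e.1.1 = w e.1.2 := by
            by_contra hc; exact hzw (by simp [hzz, hc])
          simp only [hθ1, hθ2, if_pos hzz, if_neg hww]
          rw [Real.sqrt_mul hp'.1.le, Real.sqrt_mul (by linarith [hp'.2] : (0:ℝ) ≤ 1 - p t)]
          ring_nf
        · have hww : w e.1.1 = w e.1.2 := by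
            by_contra hc; exact hzw (by simp [hzz, hc])
          simp only [hθ1, hθ2, if_neg hzz, if_pos hww]
          rw [Real.sqrt_mul hq'.1.le, Real.sqrt_mul (by linarith [hq'.2] : (0:ℝ) ≤ 1 - q t)]
          rw [mul_comm (Real.sqrt (q t)) (Real.sqrt (p t)),
            mul_comm (Real.sqrt (1 - q t)) (Real.sqrt (1 - p t))]
          ring_nf
      rw [Finset.mul_sum, if_neg hzw, one_mul]
      exact Finset.sum_congr rfl (fun t _ => hren t)
  calc (∑ e : PairIdx N, -2 * ∑ t : Fin T, Real.log (S e t))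
      = ∑ e : PairIdx N,
        (if decide (z e.1.1 = z e.1.2) = decide (w e.1.1 = w e.1.2) then (0:ℝ)
          else 1) * ∑ t, renyiBer (p t) (q t) :=
        Finset.sum_congr rfl (fun e _ => hterm e)
    _ = (∑ e : PairIdx N,
        (if decide (z e.1.1 = z e.1.2) = decide (w e.1.1 = w e.1.2) then (0:ℝ)
          else 1)) * ∑ t, renyiBer (p t) (q t) := by
        rw [Finset.sum_mul]
    _ = (1 / 2 : ℝ) *
        (2 * (pairCount z w false true + pairCount z w true false) : ℝ) *
        ∑ t, renyiBer (p t) (q t) := by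
        congr 1
        have hcount : (∑ e : PairIdx N,
            (if decide (z e.1.1 = z e.1.2) = decide (w e.1.1 = w e.1.2) then (0:ℝ)
              else 1)) =
            ((pairCount z w false true + pairCount z w true false : ℕ) : ℝ) := by
          rw [pairCount, pairCount, Finset.card_filter, Finset.card_filter]
          push_cast
          have hsub : (∑ e : PairIdx N,
              (if decide (z e.1.1 = z e.1.2) = decide (w e.1.1 = w e.1.2) then (0:ℝ)
                else 1)) =
              ∑ x ∈ Finset.univ.filter (fun x : Fin N × Fin N => x.1 < x.2),
                (if decide (z x.1 = z x.2) = decide (w x.1 = w x.2) then (0:ℝ)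
                  else 1) := by
            exact (Finset.sum_subtype (p := fun x : Fin N × Fin N => x.1 < x.2)
              (Finset.univ.filter (fun x : Fin N × Fin N => x.1 < x.2))
              (by intro x; simp)
              (fun x => if decide (z x.1 = z x.2) = decide (w x.1 = w x.2) then (0:ℝ) else 1)).symm
          rw [hsub, Finset.sum_filter, ← Finset.sum_add_distrib]
          refine Finset.sum_congr rfl (fun x _ => ?_)
          by_cases h1 : x.1 < x.2 <;> by_cases h2 : z x.1 = z x.2 <;>
            by_cases h3 : w x.1 = w x.2 <;> simp [h1, h2, h3]
        rw [hcount]; push_cast; ring
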